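/- In the polynomial ring ℂ[x_1,…,x_n], the ideal generated by all symmetric polynomials with zero constant term is equal to the ideal generated by the n polynomials h_k(x_k, x_{k+1}, …, x_n) for 1 ≤ k ≤ n, where h_k(x_k,…,x_n) denotes the sum of all monomials of total degree k in the variables x_k,…,x_n. -/

import Mathlib

open MvPolynomial Finset



/-- complete homogeneous over a list of variables -/
noncomputable def HH (n : ℕ) : List (Fin n) → ℕ → MvPolynomial (Fin n) ℂ
  | _, 0 => 1
  | [], _+1 => 0
  | a :: l, k+1 => HH n l (k+1) + X a * HH n (a :: l) k
termination_by l k => (l.length, k)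

/-- elementary symmetric over a list of variables -/
noncomputable def EE (n : ℕ) : List (Fin n) → ℕ → MvPolynomial (Fin n) ℂ
  | _, 0 => 1
  | [], _+1 => 0
  | a :: l, k+1 => EE n l (k+1) + X a * EE n l k

@[simp] lemma HH_zero (n : ℕ) (l : List (Fin n)) : HH n l 0 = 1 := by
  cases l <;> rw [HH]

@[simp] lemma HH_nil (n k : ℕ) : HH n [] (k+1) = 0 := by rw [HH]

lemma HH_cons (n k : ℕ) (a : Fin n) (l : List (Fin n)) :
    HH n (a :: l) (k+1) = HH n l (k+1) + X a * HH n (a :: l) k := by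
  rw [HH]

@[simp] lemma EE_zero (n : ℕ) (l : List (Fin n)) : EE n l 0 = 1 := by
  cases l <;> rfl

@[simp] lemma EE_nil (n k : ℕ) : EE n [] (k+1) = 0 := rfl

lemma EE_cons (n k : ℕ) (a : Fin n) (l : List (Fin n)) :
    EE n (a :: l) (k+1) = EE n l (k+1) + X a * EE n l k := rfl

/-- total degree of an exponent vector -/
def deg {n : ℕ} (d : Fin n →₀ ℕ) : ℕ := ∑ i, d i

lemma deg_eq_zero_iff {n : ℕ} (d : Fin n →₀ ℕ) : deg d = 0 ↔ d = 0 := by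
  simp only [deg, Finset.sum_eq_zero_iff, Finset.mem_univ, true_implies]
  constructor
  · intro h; ext i; exact h i
  · intro h i; simp [h]

lemma coeff_HH {n : ℕ} (l : List (Fin n)) (hl : l.Nodup) (k : ℕ) (d : Fin n →₀ ℕ) :
    coeff d (HH n l k) =
      if deg d = k ∧ ∀ i ∈ d.support, i ∈ l then 1 else 0 := by
  induction l generalizing k d with
  | nil =>
    cases k with
    | zero =>
      rw [HH_zero, coeff_one]
      congr 1
      simp only [eq_iff_iff, List.not_mem_nil]
      constructor
      · rintro rfl; simp [deg_eq_zero_iff]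
      · rintro ⟨h1, h2⟩
        have : d = 0 := by
          ext i
          by_contra hi
          exact h2 i (Finsupp.mem_support_iff.mpr hi)
        simp [this]
    | succ k =>
      rw [HH_nil, coeff_zero]
      rw [eq_comm, ite_eq_right_iff]
      rintro ⟨h1, h2⟩
      have : d = 0 := by
        ext i
        by_contra hi
        exact absurd (h2 i (Finsupp.mem_support_iff.mpr hi)) List.not_mem_nil
      rw [this, (deg_eq_zero_iff 0).mpr rfl] at h1
      exact absurd h1.symm (Nat.succ_ne_zero k)
  | cons a l ih =>
    have hal : a ∉ l := (List.nodup_cons.mp hl).1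
    have hl' : l.Nodup := (List.nodup_cons.mp hl).2
    induction k generalizing d with
    | zero =>
      rw [HH_zero, coeff_one]
      congr 1
      simp only [eq_iff_iff]
      constructor
      · rintro rfl; simp [deg_eq_zero_iff]
      · rintro ⟨h1, _⟩; exact ((deg_eq_zero_iff d).mp h1).symm
    | succ k ihk =>
      rw [HH_cons, coeff_add, mul_comm, coeff_mul_X', ih hl']
      by_cases ha : a ∈ d.support
      · have haz : d a ≠ 0 := Finsupp.mem_support_iff.mp ha
        rw [if_pos ha]
        have hfirst : (if deg d = k + 1 ∧ ∀ i ∈ d.support, i ∈ l then (1:ℂ) else 0) = 0 := by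
          rw [ite_eq_right_iff]
          rintro ⟨_, h2⟩
          exact absurd (h2 a ha) hal
        rw [hfirst, zero_add, ihk]
        set d' := d - Finsupp.single a 1 with hd'
        have hdd : d' + Finsupp.single a 1 = d := by
          ext i
          simp only [Finsupp.add_apply, Finsupp.coe_tsub, Pi.sub_apply, hd',
            Finsupp.single_apply]
          by_cases hia : a = i
          · subst hia; simp; omega
          · simp [hia]
        have hdeg : deg d = deg d' + 1 := by
          rw [← hdd]
          simp only [deg, Finsupp.add_apply, Finset.sum_add_distrib]
          congr 1
          simp [Finsupp.single_apply]
        congr 1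
        simp only [eq_iff_iff]
        constructor
        · rintro ⟨h1, h2⟩
          refine ⟨by omega, fun i hi => ?_⟩
          by_cases hia : i = a
          · simp [hia]
          · have hd'i : d' i = d i := by
              simp [hd', Finsupp.single_apply, Ne.symm hia]
            have hdi : d' i ≠ 0 := by
              rw [hd'i]; exact Finsupp.mem_support_iff.mp hi
            exact h2 i (Finsupp.mem_support_iff.mpr hdi)
        · rintro ⟨h1, h2⟩
          refine ⟨by omega, fun i hi => ?_⟩
          have hd'id : d' i ≤ d i := by
            simp only [hd', Finsupp.coe_tsub, Pi.sub_apply]; omega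
          have : d i ≠ 0 := by
            have := Finsupp.mem_support_iff.mp hi
            omega
          exact h2 i (Finsupp.mem_support_iff.mpr this)
      · rw [if_neg ha, add_zero]
        congr 1
        simp only [eq_iff_iff]
        have hda : d a = 0 := by
          by_contra h
          exact ha (Finsupp.mem_support_iff.mpr h)
        constructor
        · rintro ⟨h1, h2⟩
          exact ⟨h1, fun i hi => List.mem_cons_of_mem a (h2 i hi)⟩
        · rintro ⟨h1, h2⟩
          refine ⟨h1, fun i hi => ?_⟩
          rcases List.mem_cons.mp (h2 i hi) with h | h
          · subst h; exact absurd hi ha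
          · exact h

/-- `hk n k` is the complete homogeneous symmetric polynomial `h_k(x_k, …, x_n)`:
the sum of all monomials of total degree `k` in the variables `x_k, …, x_n`
(variables are indexed `0, …, n-1`, so the 1-based variable `x_j` is `X ⟨j-1⟩`). -/
noncomputable def hk (n k : ℕ) : MvPolynomial (Fin n) ℂ :=
  ∑ d : Fin n → Fin (k + 1),
    if (∑ i, ((d i : ℕ))) = k ∧ (∀ i : Fin n, (d i : ℕ) ≠ 0 → k - 1 ≤ (i : ℕ)) then
      ∏ i, X i ^ ((d i : ℕ))
    else 0


lemma prod_X_pow_eq (n : ℕ) (e : Fin n → ℕ) :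
    (∏ i, (X i : MvPolynomial (Fin n) ℂ) ^ e i) =
      monomial (Finsupp.equivFunOnFinite.symm e) 1 := by
  rw [← MvPolynomial.prod_X_pow_eq_monomial]
  rw [← Finset.prod_subset (Finset.subset_univ (Finsupp.equivFunOnFinite.symm e).support)]
  · apply Finset.prod_congr rfl
    intro i _
    rfl
  · intro i _ hi
    have : (Finsupp.equivFunOnFinite.symm e) i = 0 := by
      simpa using Finsupp.notMem_support_iff.mp hi
    have he : e i = 0 := this
    simp [he]

lemma coeff_hk (n k : ℕ) (hk1 : 1 ≤ k) (d : Fin n →₀ ℕ) :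
    coeff d (hk n k) =
      if deg d = k ∧ ∀ i ∈ d.support, k - 1 ≤ (i : ℕ) then 1 else 0 := by
  rw [hk, coeff_sum]
  have hterm : ∀ d' : Fin n → Fin (k+1),
      coeff d (if (∑ i, ((d' i : ℕ))) = k ∧ (∀ i : Fin n, (d' i : ℕ) ≠ 0 → k - 1 ≤ (i : ℕ)) then
        ∏ i, X i ^ ((d' i : ℕ)) else 0) =
      if ((∑ i, ((d' i : ℕ))) = k ∧ (∀ i : Fin n, (d' i : ℕ) ≠ 0 → k - 1 ≤ (i : ℕ)))
          ∧ Finsupp.equivFunOnFinite.symm (fun i => ((d' i : ℕ))) = d then (1:ℂ) else 0 := by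
    intro d'
    split_ifs with h1 h2 h3
    · show coeff d (∏ i, (X i : MvPolynomial (Fin n) ℂ) ^ ((d' i : ℕ))) = 1
      rw [prod_X_pow_eq n (fun i => (d' i : ℕ)), coeff_monomial, if_pos h2.2]
    · show coeff d (∏ i, (X i : MvPolynomial (Fin n) ℂ) ^ ((d' i : ℕ))) = 0
      rw [prod_X_pow_eq n (fun i => (d' i : ℕ)), coeff_monomial, if_neg]
      intro hc
      exact h2 ⟨h1, hc⟩
    · exact absurd h3.1 h1
    · exact coeff_zero d
  refine Eq.trans (Finset.sum_congr rfl fun d' _ => hterm d') ?_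
  by_cases hQ : deg d = k ∧ ∀ i ∈ d.support, k - 1 ≤ (i : ℕ)
  · rw [if_pos hQ]
    have hbd : ∀ i, d i < k + 1 := by
      intro i
      have : d i ≤ deg d := Finset.single_le_sum (f := fun i => d i) (fun _ _ => Nat.zero_le _)
        (Finset.mem_univ i)
      omega
    set v : Fin n → Fin (k+1) := fun i => ⟨d i, hbd i⟩ with hv
    rw [Finset.sum_eq_single_of_mem v (Finset.mem_univ v)]
    · rw [if_pos]
      constructor
      · constructor
        · exact hQ.1
        · intro i hi
          exact hQ.2 i (Finsupp.mem_support_iff.mpr hi)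
      · ext i
        rfl
    · intro d' _ hne
      rw [if_neg]
      rintro ⟨-, h2⟩
      apply hne
      funext i
      have : (d' i : ℕ) = d i := by
        rw [← h2]; rfl
      exact Fin.ext this
  · rw [if_neg hQ]
    apply Finset.sum_eq_zero
    intro d' _
    rw [if_neg]
    rintro ⟨⟨h1, h2⟩, h3⟩
    apply hQ
    constructor
    · rw [← h3]
      exact (Finset.sum_congr rfl fun i _ => rfl).trans h1
    · intro i hi
      have : d i = (d' i : ℕ) := by rw [← h3]; rfl
      exact h2 i (by rw [← this]; exact Finsupp.mem_support_iff.mp hi)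

lemma mem_drop_finRange (n m : ℕ) (i : Fin n) :
    i ∈ (List.finRange n).drop m ↔ m ≤ (i : ℕ) := by
  constructor
  · intro h
    rcases List.mem_iff_getElem.mp h with ⟨j, hj, hji⟩
    rw [List.getElem_drop] at hji
    subst hji
    simp only [List.getElem_finRange, Fin.coe_cast]
    simp only [List.length_drop, List.length_finRange] at hj
    omega
  · intro h
    have hlen : (i : ℕ) - m < ((List.finRange n).drop m).length := by
      simp only [List.length_drop, List.length_finRange]
      have := i.isLt
      omega
    apply List.mem_iff_getElem.mpr ⟨(i : ℕ) - m, hlen, ?_⟩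
    rw [List.getElem_drop]
    simp only [List.getElem_finRange]
    ext
    simp only [Fin.coe_cast]
    omega


lemma nodup_drop_finRange (n m : ℕ) : ((List.finRange n).drop m).Nodup :=
  (List.drop_sublist m _).nodup (List.nodup_finRange n)

lemma hk_eq_HH (n k : ℕ) (h1 : 1 ≤ k) :
    hk n k = HH n ((List.finRange n).drop (k-1)) k := by
  apply MvPolynomial.ext
  intro d
  rw [coeff_hk n k h1 d, coeff_HH _ (nodup_drop_finRange n (k-1)) k d]
  congr 1
  simp only [eq_iff_iff, and_congr_right_iff]
  intro _
  exact ⟨fun h i hi => (mem_drop_finRange n (k-1) i).mpr (h i hi),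
    fun h i hi => (mem_drop_finRange n (k-1) i).mp (h i hi)⟩

lemma deg_eq_sum {n : ℕ} (d : Fin n →₀ ℕ) : deg d = d.sum fun _ e => e := by
  rw [Finsupp.sum_fintype]
  · rfl
  · intro i; rfl

lemma HH_finRange_isSymmetric (n k : ℕ) :
    (HH n (List.finRange n) k).IsSymmetric := by
  intro σ
  apply MvPolynomial.ext
  intro d
  have hd : d = Finsupp.mapDomain σ (Finsupp.mapDomain σ.symm d) := by
    rw [← Finsupp.mapDomain_comp]
    simp [Finsupp.mapDomain_id]
  set e := Finsupp.mapDomain (σ.symm : Fin n → Fin n) d with he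
  rw [hd, coeff_rename_mapDomain σ σ.injective]
  rw [coeff_HH _ (List.nodup_finRange n) k, coeff_HH _ (List.nodup_finRange n) k]
  have hdeg : deg (Finsupp.mapDomain (σ : Fin n → Fin n) e) = deg e := by
    rw [deg_eq_sum, deg_eq_sum]
    exact Finsupp.sum_mapDomain_index (fun _ => rfl) (fun _ _ _ => rfl)
  simp [hdeg, List.mem_finRange]

lemma constantCoeff_HH (n k : ℕ) (h1 : 1 ≤ k) (l : List (Fin n)) (hl : l.Nodup) :
    constantCoeff (HH n l k) = 0 := by
  rw [MvPolynomial.constantCoeff_eq]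
  rw [show (coeff 0 : MvPolynomial (Fin n) ℂ → ℂ) (HH n l k) = coeff 0 (HH n l k) from rfl,
    coeff_HH l hl k 0]
  rw [ite_eq_right_iff]
  rintro ⟨hz, -⟩
  exfalso
  simp [deg] at hz
  omega

lemma drop_finRange_cons (n m : ℕ) (hm : m < n) :
    (List.finRange n).drop m =
      (⟨m, hm⟩ : Fin n) :: (List.finRange n).drop (m+1) := by
  have hm' : m < (List.finRange n).length := by simpa using hm
  rw [List.drop_eq_getElem_cons hm']
  congr 1
  rw [List.getElem_finRange]
  ext
  simp

lemma HH_cons' (n k : ℕ) (a : Fin n) (l : List (Fin n)) :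
    HH n (a :: l) (k+1) = HH n l (k+1) + X a * HH n (a :: l) k := by
  rw [HH]

lemma HH_drop_mem_I (n : ℕ) :
    ∀ m k : ℕ, 1 ≤ k → k ≤ n → m ≤ k - 1 →
      HH n ((List.finRange n).drop m) k ∈
        Ideal.span {f : MvPolynomial (Fin n) ℂ | f.IsSymmetric ∧ constantCoeff f = 0} := by
  intro m
  induction m with
  | zero =>
    intro k h1 h2 _
    rw [List.drop_zero]
    exact Ideal.subset_span ⟨HH_finRange_isSymmetric n k,
      constantCoeff_HH n k h1 _ (List.nodup_finRange n)⟩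
  | succ m ih =>
    intro k h1 h2 hm
    have hk2 : 2 ≤ k := by omega
    have hmn : m < n := by omega
    obtain ⟨k', rfl⟩ : ∃ k', k = k' + 1 := ⟨k - 1, by omega⟩
    have hrec := HH_cons' n k' (⟨m, hmn⟩ : Fin n) ((List.finRange n).drop (m+1))
    rw [← drop_finRange_cons n m hmn] at hrec
    have : HH n ((List.finRange n).drop (m+1)) (k'+1)
        = HH n ((List.finRange n).drop m) (k'+1)
          - X (⟨m, hmn⟩ : Fin n) * HH n ((List.finRange n).drop m) k' := by
      rw [hrec]; ring
    rw [this]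
    refine Ideal.sub_mem _ (ih (k'+1) h1 h2 (by omega)) (Ideal.mul_mem_left _ _ ?_)
    exact ih k' (by omega) (by omega) (by omega)

lemma HH_drop_mem_J (n : ℕ) :
    ∀ j k m : ℕ, 1 ≤ k → k ≤ n → m ≤ k - 1 → k - 1 - m = j →
      HH n ((List.finRange n).drop m) k ∈
        Ideal.span {g : MvPolynomial (Fin n) ℂ | ∃ k, 1 ≤ k ∧ k ≤ n ∧ g = hk n k} := by
  intro j
  induction j with
  | zero =>
    intro k m h1 h2 hm hj
    have : m = k - 1 := by omega
    subst this
    rw [← hk_eq_HH n k h1]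
    exact Ideal.subset_span ⟨k, h1, h2, rfl⟩
  | succ j ih =>
    intro k m h1 h2 hm hj
    have hk2 : 2 ≤ k := by omega
    have hmn : m < n := by omega
    obtain ⟨k', rfl⟩ : ∃ k', k = k' + 1 := ⟨k - 1, by omega⟩
    have hrec := HH_cons' n k' (⟨m, hmn⟩ : Fin n) ((List.finRange n).drop (m+1))
    rw [← drop_finRange_cons n m hmn] at hrec
    rw [hrec]
    refine Ideal.add_mem _ (ih (k'+1) (m+1) h1 h2 (by omega) (by omega))
      (Ideal.mul_mem_left _ _ ?_)
    exact ih k' m (by omega) (by omega) (by omega) (by omega)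


noncomputable def FF (n : ℕ) (l : List (Fin n)) (k : ℕ) : MvPolynomial (Fin n) ℂ :=
  ∑ i ∈ Finset.range (k+1), (-1 : MvPolynomial (Fin n) ℂ)^i * EE n l i * HH n l (k-i)

noncomputable def AA (n : ℕ) (a : Fin n) (l : List (Fin n)) (k : ℕ) :
    MvPolynomial (Fin n) ℂ :=
  ∑ i ∈ Finset.range (k+1), (-1 : MvPolynomial (Fin n) ℂ)^i * EE n l i * HH n (a :: l) (k-i)

lemma AA_succ (n : ℕ) (a : Fin n) (l : List (Fin n)) (j : ℕ) :
    AA n a l (j+1) = FF n l (j+1) + X a * AA n a l j := by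
  have h1 : AA n a l (j+1)
      = (∑ i ∈ Finset.range (j+1), ((-1 : MvPolynomial (Fin n) ℂ)^i * EE n l i * HH n l (j+1-i)
          + X a * ((-1 : MvPolynomial (Fin n) ℂ)^i * EE n l i * HH n (a :: l) (j-i))))
        + (-1 : MvPolynomial (Fin n) ℂ)^(j+1) * EE n l (j+1) * HH n (a :: l) 0 := by
    rw [AA, Finset.sum_range_succ]
    congr 1
    · refine Finset.sum_congr rfl fun i hi => ?_
      rw [Finset.mem_range] at hi
      rw [show j+1-i = (j-i)+1 by omega, HH_cons']
      ring
    · norm_num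
  rw [h1, Finset.sum_add_distrib, ← Finset.mul_sum]
  have h4 : FF n l (j+1)
      = (∑ i ∈ Finset.range (j+1), (-1 : MvPolynomial (Fin n) ℂ)^i * EE n l i * HH n l (j+1-i))
        + (-1 : MvPolynomial (Fin n) ℂ)^(j+1) * EE n l (j+1) * 1 := by
    rw [FF, Finset.sum_range_succ, Nat.sub_self, HH_zero]
  rw [h4, AA, HH_zero]
  ring

lemma FF_cons (n : ℕ) (a : Fin n) (l : List (Fin n)) (j : ℕ) :
    FF n (a :: l) (j+1) = FF n l (j+1) := by
  have h1 : FF n (a :: l) (j+1)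
      = HH n (a :: l) (j+1)
        + ∑ i ∈ Finset.range (j+1),
            ((-1 : MvPolynomial (Fin n) ℂ)^(i+1) * EE n l (i+1) * HH n (a :: l) (j-i)
              + X a * ((-1 : MvPolynomial (Fin n) ℂ)^(i+1) * EE n l i * HH n (a :: l) (j-i))) := by
    rw [FF, Finset.sum_range_succ', add_comm]
    congr 1
    · simp
    · refine Finset.sum_congr rfl fun i hi => ?_
      rw [Nat.succ_sub_succ, EE_cons]
      ring
  have h2 : AA n a l (j+1)
      = HH n (a :: l) (j+1)
        + ∑ i ∈ Finset.range (j+1),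
            (-1 : MvPolynomial (Fin n) ℂ)^(i+1) * EE n l (i+1) * HH n (a :: l) (j-i) := by
    rw [AA, Finset.sum_range_succ', add_comm]
    congr 1
    · simp
    · refine Finset.sum_congr rfl fun i hi => ?_
      rw [Nat.succ_sub_succ]
  have hS2 : ∑ i ∈ Finset.range (j+1),
      X a * ((-1 : MvPolynomial (Fin n) ℂ)^(i+1) * EE n l i * HH n (a :: l) (j-i))
      = X a * (- AA n a l j) := by
    rw [AA, ← Finset.sum_neg_distrib, Finset.mul_sum]
    refine Finset.sum_congr rfl fun i hi => ?_
    ring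
  rw [h1, Finset.sum_add_distrib, hS2]
  have h3 := AA_succ n a l j
  linear_combination -h2 + h3

lemma FF_eq_zero (n : ℕ) (l : List (Fin n)) (k : ℕ) : FF n l (k+1) = 0 := by
  induction l with
  | nil =>
    rw [FF]
    apply Finset.sum_eq_zero
    intro i hi
    match i with
    | 0 => simp [show k + 1 - 0 = k + 1 from rfl]
    | i+1 => simp
  | cons a l ih => rw [FF_cons, ih]


lemma EE_eq_multiset_esymm (n : ℕ) (l : List (Fin n)) (k : ℕ) :
    EE n l k = Multiset.esymm ((l.map X : List (MvPolynomial (Fin n) ℂ)) : Multiset _) k := by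
  induction l generalizing k with
  | nil =>
    cases k with
    | zero => simp [Multiset.esymm]
    | succ k => simp [Multiset.esymm, Multiset.powersetCard_zero_right]
  | cons a l ih =>
    cases k with
    | zero => simp [Multiset.esymm]
    | succ k =>
      rw [EE_cons, ih, ih]
      show _ = Multiset.esymm
        (X a ::ₘ ((l.map X : List (MvPolynomial (Fin n) ℂ)) : Multiset (MvPolynomial (Fin n) ℂ)))
        (k+1)
      conv_rhs => rw [Multiset.esymm, Multiset.powersetCard_cons, Multiset.map_add,
        Multiset.sum_add, Multiset.map_map]
      congr 1
      rw [show ((Multiset.prod ∘ Multiset.cons (X a)) : Multiset (MvPolynomial (Fin n) ℂ) → _)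
        = fun t => X a * t.prod from funext fun t => by simp [Multiset.prod_cons]]
      rw [Multiset.sum_map_mul_left]
      rfl

lemma esymm_eq_EE (n k : ℕ) :
    esymm (Fin n) ℂ k = EE n (List.finRange n) k := by
  rw [EE_eq_multiset_esymm, esymm_eq_multiset_esymm]
  congr 1

lemma constantCoeff_EE (n k : ℕ) (l : List (Fin n)) :
    constantCoeff (EE n l (k+1)) = 0 := by
  induction l with
  | nil => simp
  | cons a l ih => rw [EE_cons]; simp [ih]

lemma aeval_sub_C_mem_span (n : ℕ) (g : Fin n → MvPolynomial (Fin n) ℂ)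
    (p : MvPolynomial (Fin n) ℂ) :
    aeval g p - C (constantCoeff p) ∈ Ideal.span (Set.range g) := by
  induction p using MvPolynomial.induction_on with
  | C a => simp
  | add p q hp hq =>
    have := Ideal.add_mem _ hp hq
    convert this using 1
    simp only [map_add]
    ring
  | mul_X p i hp =>
    have h1 : constantCoeff (p * X i) = 0 := by simp
    rw [h1, map_mul, aeval_X, map_zero, sub_zero]
    exact Ideal.mul_mem_left _ _ (Ideal.subset_span ⟨i, rfl⟩)

lemma constantCoeff_aeval_eq (n : ℕ) (g : Fin n → MvPolynomial (Fin n) ℂ)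
    (hg : ∀ i, constantCoeff (g i) = 0) (p : MvPolynomial (Fin n) ℂ) :
    constantCoeff (aeval g p) = constantCoeff p := by
  induction p using MvPolynomial.induction_on with
  | C a => simp
  | add p q hp hq =>
    simp only [map_add]
    exact congrArg₂ (· + ·) hp hq
  | mul_X p i hp => simp [hg i]


lemma esymm_mem_J (n k : ℕ) (h1 : 1 ≤ k) (h2 : k ≤ n) :
    esymm (Fin n) ℂ k ∈
      Ideal.span {g : MvPolynomial (Fin n) ℂ | ∃ k, 1 ≤ k ∧ k ≤ n ∧ g = hk n k} := by
  set J := Ideal.span {g : MvPolynomial (Fin n) ℂ | ∃ k, 1 ≤ k ∧ k ≤ n ∧ g = hk n k} with hJ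
  obtain ⟨k', rfl⟩ : ∃ k', k = k' + 1 := ⟨k - 1, by omega⟩
  rw [esymm_eq_EE]
  have hF := FF_eq_zero n (List.finRange n) k'
  rw [FF, Finset.sum_range_succ, Nat.sub_self, HH_zero] at hF
  have hsum : (∑ i ∈ Finset.range (k'+1),
      (-1 : MvPolynomial (Fin n) ℂ)^i * EE n (List.finRange n) i
        * HH n (List.finRange n) (k'+1-i)) ∈ J := by
    refine Ideal.sum_mem _ fun i hi => ?_
    rw [Finset.mem_range] at hi
    refine Ideal.mul_mem_left _ _ ?_
    have := HH_drop_mem_J n (k'-i) (k'+1-i) 0 (by omega) (by omega) (by omega) (by omega)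
    rwa [List.drop_zero] at this
  have h3 : (-1 : MvPolynomial (Fin n) ℂ)^(k'+1) * EE n (List.finRange n) (k'+1) ∈ J := by
    have heq : (-1 : MvPolynomial (Fin n) ℂ)^(k'+1) * EE n (List.finRange n) (k'+1)
        = -(∑ i ∈ Finset.range (k'+1),
            (-1 : MvPolynomial (Fin n) ℂ)^i * EE n (List.finRange n) i
              * HH n (List.finRange n) (k'+1-i)) := by
      linear_combination hF
    rw [heq]
    exact neg_mem hsum
  have h4 := Ideal.mul_mem_left _ ((-1 : MvPolynomial (Fin n) ℂ)^(k'+1)) h3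
  rwa [← mul_assoc, ← pow_add, Even.neg_one_pow ⟨k'+1, by ring⟩, one_mul] at h4

/-- The ideal of `ℂ[x_1,…,x_n]` generated by all symmetric polynomials with zero
constant term equals the ideal generated by `h_k(x_k,…,x_n)` for `1 ≤ k ≤ n`. -/
theorem stmt0 (n : ℕ) :
    Ideal.span {f : MvPolynomial (Fin n) ℂ | f.IsSymmetric ∧ constantCoeff f = 0} =
    Ideal.span {g : MvPolynomial (Fin n) ℂ | ∃ k, 1 ≤ k ∧ k ≤ n ∧ g = hk n k} := by
  apply le_antisymm
  · rw [Ideal.span_le]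
    rintro f ⟨hsym, hc0⟩
    have hcard : Fintype.card (Fin n) ≤ n := by simp
    obtain ⟨p, hp⟩ := esymmAlgHom_surjective (σ := Fin n) (R := ℂ) hcard
      ⟨f, (mem_symmetricSubalgebra f).mpr hsym⟩
    have hval := congrArg Subtype.val hp
    rw [esymmAlgHom_apply] at hval
    set gE : Fin n → MvPolynomial (Fin n) ℂ := fun i => esymm (Fin n) ℂ (i + 1) with hgE
    have hg0 : ∀ i, constantCoeff (gE i) = 0 := fun i => by
      rw [hgE]
      simp only []
      rw [esymm_eq_EE]
      exact constantCoeff_EE n _ _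
    have hcp : constantCoeff p = 0 := by
      rw [← constantCoeff_aeval_eq n gE hg0 p, hval, hc0]
    have hmem := aeval_sub_C_mem_span n gE p
    rw [hcp, map_zero, sub_zero, hval] at hmem
    refine Ideal.span_le.mpr ?_ hmem
    rintro x ⟨i, rfl⟩
    exact esymm_mem_J n ((i : ℕ) + 1) (by omega) (by have := i.isLt; omega)
  · rw [Ideal.span_le]
    rintro g ⟨k, h1, h2, rfl⟩
    rw [hk_eq_HH n k h1]
    exact HH_drop_mem_I n (k-1) k h1 h2 le_rfl
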